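/- Resource bisimilarity ≃ is the largest congruence included in bisimilarity ∼ that is also a bisimulation; in particular ≃ ⊆ ≈ ⊆ ∼. -/
import Mathlib


/-- A labeled Petri net: places `P`, transitions `T`, action labels `Act`. -/
structure LPN (P T Act : Type) where
  pre : T → P → ℕ
  post : T → P → ℕ
  lab : T → Act

variable {P T Act : Type}

/-- Firing relation: `M` fires `t` yielding `M'`. -/
def Fires (N : LPN P T Act) (M : P → ℕ) (t : T) (M' : P → ℕ) : Prop :=
  N.pre t ≤ M ∧ M' = fun p => M p - N.pre t p + N.post t p

/-- `R` satisfies the (ordinary) transfer property w.r.t. `R'`. -/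
def Transfer (N : LPN P T Act) (R R' : (P → ℕ) → (P → ℕ) → Prop) : Prop :=
  ∀ M₁ M₂, R M₁ M₂ → ∀ t M₁', Fires N M₁ t M₁' →
    ∃ u M₂', N.lab u = N.lab t ∧ Fires N M₂ u M₂' ∧ R' M₁' M₂'

/-- `R` is a bisimulation. -/
def IsBisim (N : LPN P T Act) (R : (P → ℕ) → (P → ℕ) → Prop) : Prop :=
  Transfer N R R ∧ Transfer N (fun a b => R b a) (fun a b => R b a)

/-- Bisimilarity `∼`. -/
def Bisim (N : LPN P T Act) (M₁ M₂ : P → ℕ) : Prop :=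
  ∃ R, IsBisim N R ∧ R M₁ M₂

/-- A congruence on markings: an equivalence compatible with addition. -/
def IsCongruence (ρ : (P → ℕ) → (P → ℕ) → Prop) : Prop :=
  Equivalence ρ ∧ ∀ r₁ r₂ s, ρ r₁ r₂ → ρ (r₁ + s) (r₂ + s)

/-- Resource similarity `≈`. -/
def ResSim (N : LPN P T Act) (r s : P → ℕ) : Prop :=
  ∀ w, Bisim N (r + w) (s + w)

/-- `R` satisfies the resource transfer property w.r.t. `R'`. -/
def ResTransfer (N : LPN P T Act) (R R' : (P → ℕ) → (P → ℕ) → Prop) : Prop :=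
  ∀ r s, R r s → ∀ t r', Fires N (fun p => r p + (N.pre t p - r p)) t r' →
    ∃ u s', N.lab u = N.lab t ∧
      Fires N (fun p => s p + (N.pre t p - r p)) u s' ∧ R' r' s'

/-- `R` is a resource bisimulation. -/
def IsResBisim (N : LPN P T Act) (R : (P → ℕ) → (P → ℕ) → Prop) : Prop :=
  ResTransfer N R R ∧ ResTransfer N (fun a b => R b a) (fun a b => R b a)

/-- Resource bisimilarity `≃`. -/
def ResBisim (N : LPN P T Act) (r s : P → ℕ) : Prop :=
  ∃ R, IsResBisim N R ∧ R r s

/-- Stratified bisimilarity `∼ᵢ`. -/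
def Strat (N : LPN P T Act) : ℕ → (P → ℕ) → (P → ℕ) → Prop
  | 0, _, _ => True
  | i + 1, M₁, M₂ =>
      (∀ t M₁', Fires N M₁ t M₁' →
        ∃ u M₂', N.lab u = N.lab t ∧ Fires N M₂ u M₂' ∧ Strat N i M₁' M₂') ∧
      (∀ t M₂', Fires N M₂ t M₂' →
        ∃ u M₁', N.lab u = N.lab t ∧ Fires N M₁ u M₁' ∧ Strat N i M₂' M₁')

/-- Stratified resource bisimilarity `≃ᵢ`. -/
def StratRes (N : LPN P T Act) : ℕ → (P → ℕ) → (P → ℕ) → Prop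
  | 0, _, _ => True
  | i + 1, r, s =>
      (∀ t r', Fires N (fun p => r p + (N.pre t p - r p)) t r' →
        ∃ u s', N.lab u = N.lab t ∧
          Fires N (fun p => s p + (N.pre t p - r p)) u s' ∧ StratRes N i r' s') ∧
      (∀ t s', Fires N (fun p => s p + (N.pre t p - s p)) t s' →
        ∃ u r', N.lab u = N.lab t ∧
          Fires N (fun p => r p + (N.pre t p - s p)) u r' ∧ StratRes N i s' r')

/-- The equivalence level: the largest `i` with `r ≃ᵢ s` (`⊤` = ω if all `i`). -/
noncomputable def eqlev (N : LPN P T Act) (r s : P → ℕ) : ℕ∞ :=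
  sSup {n : ℕ∞ | ∃ i : ℕ, n = (i : ℕ∞) ∧ StratRes N i r s}

section Aux

variable (N : LPN P T Act)

/-- Additive closure of a relation. -/
def clos (R : (P → ℕ) → (P → ℕ) → Prop) (a b : P → ℕ) : Prop :=
  ∃ r s w, R r s ∧ a = r + w ∧ b = s + w

lemma clos_self {R : (P → ℕ) → (P → ℕ) → Prop} {r s : P → ℕ} (h : R r s) : clos R r s :=
  ⟨r, s, 0, h, (add_zero r).symm, (add_zero s).symm⟩

lemma transfer_mono {R₁ R₁' R₂ R₂' : (P → ℕ) → (P → ℕ) → Prop}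
    (h1 : ∀ a b, R₂ a b → R₁ a b) (h2 : ∀ a b, R₁' a b → R₂' a b)
    (h : Transfer N R₁ R₁') : Transfer N R₂ R₂' := by
  intro M₁ M₂ hr t M₁' hf
  obtain ⟨u, s', hl, hfs, hr'⟩ := h M₁ M₂ (h1 _ _ hr) t M₁' hf
  exact ⟨u, s', hl, hfs, h2 _ _ hr'⟩

lemma transfer_comp {R₁ R₁' R₂ R₂' : (P → ℕ) → (P → ℕ) → Prop}
    (h1 : Transfer N R₁ R₁') (h2 : Transfer N R₂ R₂') :
    Transfer N (fun a c => ∃ b, R₁ a b ∧ R₂ b c) (fun a c => ∃ b, R₁' a b ∧ R₂' b c) := by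
  rintro M₁ M₃ ⟨M₂, hr1, hr2⟩ t M₁' hf
  obtain ⟨u, M₂', hl, hfs, hr1'⟩ := h1 M₁ M₂ hr1 t M₁' hf
  obtain ⟨v, M₃', hl', hfs', hr2'⟩ := h2 M₂ M₃ hr2 u M₂' hfs
  exact ⟨v, M₃', hl'.trans hl, hfs', M₂', hr1', hr2'⟩

/-- The key computation: the additive closure of a relation with the resource transfer
property has the ordinary transfer property. -/
lemma clos_transfer {R R' : (P → ℕ) → (P → ℕ) → Prop} (h : ResTransfer N R R') :
    Transfer N (clos R) (clos R') := by
  rintro M₁ M₂ ⟨r, s, w, hrs, rfl, rfl⟩ t M₁' ⟨hle, rfl⟩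
  have hle' : ∀ p, N.pre t p ≤ r p + w p := by
    intro p; have := hle p; simpa using this
  have hfire : Fires N (fun p => r p + (N.pre t p - r p)) t
      (fun p => (r p + (N.pre t p - r p)) - N.pre t p + N.post t p) := by
    refine ⟨fun p => ?_, rfl⟩
    simp only
    omega
  obtain ⟨u, s', hlab, ⟨hleu, rfl⟩, hR'⟩ := h r s hrs t _ hfire
  have hleu' : ∀ p, N.pre u p ≤ s p + (N.pre t p - r p) := by
    intro p; have := hleu p; simpa using this
  refine ⟨u, fun p => (s p + (N.pre t p - r p) - N.pre u p + N.post u p)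
      + (w p - (N.pre t p - r p)), hlab, ⟨fun p => ?_, funext fun p => ?_⟩, ?_⟩
  · have := hleu' p; have := hle' p
    simp only [Pi.add_apply]
    omega
  · have := hleu' p; have := hle' p
    simp only [Pi.add_apply]
    omega
  · refine ⟨_, _, fun p => w p - (N.pre t p - r p), hR', funext fun p => ?_, rfl⟩
    have := hle' p
    simp only [Pi.add_apply]
    omega

/-- An additive relation with the ordinary transfer property has the resource transfer
property. -/
lemma resTransfer_of_transfer {ρ : (P → ℕ) → (P → ℕ) → Prop}
    (hAdd : ∀ r s w, ρ r s → ρ (r + w) (s + w)) (hT : Transfer N ρ ρ) :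
    ResTransfer N ρ ρ := by
  intro r s hrs t r' hf
  have h2 : ρ (r + (N.pre t - r)) (s + (N.pre t - r)) := hAdd _ _ _ hrs
  have hf' : Fires N (r + (N.pre t - r)) t r' := hf
  obtain ⟨u, s', hl, hfs, h'⟩ := hT _ _ h2 t r' hf'
  exact ⟨u, s', hl, hfs, h'⟩

/-- Packaged hypotheses: additive + bisimulation. -/
def Good (ρ : (P → ℕ) → (P → ℕ) → Prop) : Prop :=
  (∀ r s w, ρ r s → ρ (r + w) (s + w)) ∧ Transfer N ρ ρ ∧
    Transfer N (fun a b => ρ b a) (fun a b => ρ b a)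

lemma good_isResBisim {ρ : (P → ℕ) → (P → ℕ) → Prop} (h : Good N ρ) : IsResBisim N ρ :=
  ⟨resTransfer_of_transfer N h.1 h.2.1,
   resTransfer_of_transfer N (fun r s w hr => h.1 s r w hr) h.2.2⟩

lemma good_clos {R : (P → ℕ) → (P → ℕ) → Prop} (hR : IsResBisim N R) : Good N (clos R) := by
  refine ⟨?_, clos_transfer N hR.1, ?_⟩
  · rintro a b e ⟨r, s, w, h, rfl, rfl⟩
    exact ⟨r, s, w + e, h, add_assoc r w e, add_assoc s w e⟩
  · refine transfer_mono N (R₁ := clos (fun a b => R b a)) (R₁' := clos (fun a b => R b a))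
      ?_ ?_ (clos_transfer N hR.2)
    · rintro a b ⟨r, s, w, h, hb, ha⟩
      exact ⟨s, r, w, h, ha, hb⟩
    · rintro a b ⟨r, s, w, h, ha, hb⟩
      exact ⟨s, r, w, h, hb, ha⟩

lemma good_comp {ρ₁ ρ₂ : (P → ℕ) → (P → ℕ) → Prop} (h1 : Good N ρ₁) (h2 : Good N ρ₂) :
    Good N (fun a c => ∃ b, ρ₁ a b ∧ ρ₂ b c) := by
  refine ⟨?_, transfer_comp N h1.2.1 h2.2.1, ?_⟩
  · rintro a c w ⟨b, ha, hb⟩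
    exact ⟨b + w, h1.1 _ _ _ ha, h2.1 _ _ _ hb⟩
  · refine transfer_mono N
      (R₁ := fun a c => ∃ b, ρ₂ b a ∧ ρ₁ c b) (R₁' := fun a c => ∃ b, ρ₂ b a ∧ ρ₁ c b)
      ?_ ?_ (transfer_comp N h2.2.2 h1.2.2)
    · rintro a c ⟨b, hb, ha⟩; exact ⟨b, ha, hb⟩
    · rintro a c ⟨b, ha, hb⟩; exact ⟨b, hb, ha⟩

lemma eq_isResBisim : IsResBisim N (Eq : (P → ℕ) → (P → ℕ) → Prop) := by
  constructor
  · rintro r s rfl t r' hf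
    exact ⟨t, r', rfl, hf, rfl⟩
  · rintro r s rfl t r' hf
    exact ⟨t, r', rfl, hf, rfl⟩

lemma fill_zero {r : P → ℕ} (s : P → ℕ) {t : T} (h : N.pre t ≤ r) :
    (fun p => s p + (N.pre t p - r p)) = s := by
  funext p
  have hp : N.pre t p ≤ r p := h p
  omega

lemma fill_eq_self {r : P → ℕ} {t : T} (h : N.pre t ≤ r) :
    (fun p => r p + (N.pre t p - r p)) = r :=
  fill_zero N r h

lemma resBisim_isBisim : IsBisim N (ResBisim N) := by
  constructor
  · rintro M₁ M₂ ⟨R, hR, hr⟩ t M₁' hf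
    have hle : N.pre t ≤ M₁ := hf.1
    obtain ⟨u, s', hlab, hfs, hrel⟩ := hR.1 M₁ M₂ hr t M₁' (by
      rw [fill_eq_self N hle]; exact hf)
    rw [fill_zero N M₂ hle] at hfs
    exact ⟨u, s', hlab, hfs, R, hR, hrel⟩
  · rintro M₁ M₂ ⟨R, hR, hr⟩ t M₁' hf
    have hle : N.pre t ≤ M₁ := hf.1
    obtain ⟨u, s', hlab, hfs, hrel⟩ := hR.2 M₁ M₂ hr t M₁' (by
      rw [fill_eq_self N hle]; exact hf)
    rw [fill_zero N M₂ hle] at hfs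
    exact ⟨u, s', hlab, hfs, R, hR, hrel⟩

end Aux

/-- Resource bisimilarity `≃` is the largest congruence included in bisimilarity `∼` that is
also a bisimulation; in particular `≃ ⊆ ≈ ⊆ ∼`. -/
theorem resBisim_largest_congruence_bisim (N : LPN P T Act) :
    IsCongruence (ResBisim N) ∧
    IsBisim N (ResBisim N) ∧
    (∀ r s : P → ℕ, ResBisim N r s → ResSim N r s) ∧
    (∀ r s : P → ℕ, ResSim N r s → Bisim N r s) ∧
    (∀ ρ, IsCongruence ρ → (∀ r s : P → ℕ, ρ r s → Bisim N r s) → IsBisim N ρ →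
      ∀ r s, ρ r s → ResBisim N r s) := by
  refine ⟨⟨⟨?_, ?_, ?_⟩, ?_⟩, resBisim_isBisim N, ?_, ?_, ?_⟩
  · -- reflexivity
    exact fun r => ⟨Eq, eq_isResBisim N, rfl⟩
  · -- symmetry
    rintro r s ⟨R, hR, h⟩
    exact ⟨fun a b => R b a, ⟨hR.2, hR.1⟩, h⟩
  · -- transitivity
    rintro r s q ⟨R₁, h₁, hr₁⟩ ⟨R₂, h₂, hr₂⟩
    exact ⟨fun a c => ∃ b, clos R₁ a b ∧ clos R₂ b c,
      good_isResBisim N (good_comp N (good_clos N h₁) (good_clos N h₂)),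
      s, clos_self hr₁, clos_self hr₂⟩
  · -- additivity
    rintro r₁ r₂ s ⟨R, hR, h⟩
    exact ⟨clos R, good_isResBisim N (good_clos N hR), r₁, r₂, s, h, rfl, rfl⟩
  · -- ≃ ⊆ ≈
    rintro r s ⟨R, hR, h⟩ w
    have hg := good_clos N hR
    exact ⟨clos R, ⟨hg.2.1, hg.2.2⟩, r, s, w, h, rfl, rfl⟩
  · -- ≈ ⊆ ∼
    intro r s h
    simpa using h 0
  · -- largest
    rintro ρ ⟨hEq, hAdd⟩ _ hBis r s h
    exact ⟨ρ, good_isResBisim N ⟨fun r s w hr => hAdd r s w hr, hBis.1, hBis.2⟩, h⟩
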